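/- Let y₁,…,y_m ∈ ℝ³ be unit vectors (m ≥ 1), k_p, k_d > 0, and set S = Σ_{j=1}^m π_{y_j}. Define A = [[0, −I₃],[k_p S, k_d m I₃]], P = (1/2)·[[I₃, (1/(k_d m)) I₃],[(1/(k_d m)) I₃, I₃]], and Q = [[ (k_p/(k_d m)) S, (k_p/2) S ],[ (k_p/2) S, (k_d m − 1/(k_d m)) I₃ ]]. Then Aᵀ P + P A = Q; consequently, along any solution of ẋ = −A(t) x (with A(t) of this form for time-varying unit vectors y_j(t)), the function 𝓛(t) = x(t)ᵀ P x(t) satisfies d𝓛/dt = −x(t)ᵀ Q(t) x(t). Moreover, if k_d m > 1, then P is positive definite. -/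

import Mathlib

open Matrix

noncomputable section

/-- Projector onto the plane orthogonal to the unit vector `y`: `π_y = I₃ - y yᵀ`. -/
def proj (y : Fin 3 → ℝ) : Matrix (Fin 3) (Fin 3) ℝ := 1 - Matrix.vecMulVec y y

/-- The closed-loop matrix `A = [[0, −I],[k_p S, k_d m I]]` (equation (9)). -/
def AMat (kp kd : ℝ) (m : ℕ) (S : Matrix (Fin 3) (Fin 3) ℝ) :
    Matrix (Fin 3 ⊕ Fin 3) (Fin 3 ⊕ Fin 3) ℝ :=
  Matrix.fromBlocks 0 (-1) (kp • S) ((kd * (m : ℝ)) • 1)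

/-- The Lyapunov matrix `P = (1/2)[[I, (1/(k_d m))I],[(1/(k_d m))I, I]]` (equation (9)). -/
def PMat (kp kd : ℝ) (m : ℕ) : Matrix (Fin 3 ⊕ Fin 3) (Fin 3 ⊕ Fin 3) ℝ :=
  (1 / 2 : ℝ) • Matrix.fromBlocks 1 ((1 / (kd * (m : ℝ))) • 1) ((1 / (kd * (m : ℝ))) • 1) 1

/-- The matrix `Q = [[(k_p/(k_d m))S, (k_p/2)S],[(k_p/2)S, (k_d m − 1/(k_d m))I]]`
(equation (10), with the bottom-right block summed over the `m` neighbors). -/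
def QMat (kp kd : ℝ) (m : ℕ) (S : Matrix (Fin 3) (Fin 3) ℝ) :
    Matrix (Fin 3 ⊕ Fin 3) (Fin 3 ⊕ Fin 3) ℝ :=
  Matrix.fromBlocks ((kp / (kd * (m : ℝ))) • S) ((kp / 2) • S)
    ((kp / 2) • S) ((kd * (m : ℝ) - 1 / (kd * (m : ℝ))) • 1)

lemma proj_symm (y : Fin 3 → ℝ) : (proj y)ᵀ = proj y := by
  ext i j
  simp [proj, vecMulVec_apply, mul_comm, Matrix.one_apply, eq_comm]
 

lemma lyap (kp kd : ℝ) (m : ℕ) (S : Matrix (Fin 3) (Fin 3) ℝ) (hS : Sᵀ = S)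
    (hd : kd * (m : ℝ) ≠ 0) :
    (AMat kp kd m S)ᵀ * PMat kp kd m + PMat kp kd m * AMat kp kd m S = QMat kp kd m S := by
  have h1 := left_ne_zero_of_mul hd
  have h2 := right_ne_zero_of_mul hd
  unfold AMat PMat QMat
  rw [Matrix.mul_smul, Matrix.smul_mul, fromBlocks_transpose, fromBlocks_multiply,
    fromBlocks_multiply, ← smul_add, fromBlocks_add, fromBlocks_smul]
  rw [fromBlocks_inj]
  refine ⟨?_, ?_, ?_, ?_⟩ <;> ext i j <;>
    simp [hS, Matrix.smul_apply, Matrix.add_apply, Matrix.mul_apply, Matrix.one_apply] <;>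
    (try split_ifs) <;> field_simp <;> ring

lemma quadDeriv {n : Type*} [Fintype n] (P : Matrix n n ℝ) (x : ℝ → (n → ℝ)) (v : n → ℝ)
    (t : ℝ) (hx : HasDerivAt x v t) :
    HasDerivAt (fun s => x s ⬝ᵥ P.mulVec (x s))
      (v ⬝ᵥ P.mulVec (x t) + x t ⬝ᵥ P.mulVec v) t := by
  have h : ∀ i, HasDerivAt (fun s => x s i) (v i) t := fun i => hasDerivAt_pi.1 hx i
  have key : (fun s => x s ⬝ᵥ P.mulVec (x s)) =
      fun s => ∑ i, ∑ j, x s i * (P i j * x s j) := by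
    funext s; simp [dotProduct, mulVec, Finset.mul_sum]
  rw [key]
  have hd := HasDerivAt.fun_sum (u := Finset.univ)
    (fun i (_ : i ∈ Finset.univ) => HasDerivAt.fun_sum (u := Finset.univ)
      (fun j (_ : j ∈ Finset.univ) => ((h i).fun_mul ((h j).const_mul (P i j)))))
  refine hd.congr_deriv ?_
  simp [dotProduct, mulVec, Finset.mul_sum, Finset.sum_add_distrib]

lemma dotMulVec {n : Type*} [Fintype n] (A B : Matrix n n ℝ) (x : n → ℝ) :
    x ⬝ᵥ ((A * B) *ᵥ x) = (Aᵀ *ᵥ x) ⬝ᵥ (B *ᵥ x) := by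
  rw [← Matrix.mulVec_mulVec, Matrix.dotProduct_mulVec (w := B *ᵥ x)]
  rw [Matrix.mulVec_transpose]

lemma quadForm (kp kd : ℝ) (m : ℕ) (z : Fin 3 ⊕ Fin 3 → ℝ) :
    z ⬝ᵥ (PMat kp kd m) *ᵥ z =
      (1/2) * ((z ∘ Sum.inl) ⬝ᵥ (z ∘ Sum.inl) + (z ∘ Sum.inr) ⬝ᵥ (z ∘ Sum.inr)
        + 2 * (1/(kd * (m:ℝ))) * ((z ∘ Sum.inl) ⬝ᵥ (z ∘ Sum.inr))) := by
  rw [PMat, Matrix.smul_mulVec, Matrix.fromBlocks_mulVec]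
  simp [dotProduct, Fintype.sum_sum_type, mulVec, Matrix.one_apply, Fin.sum_univ_three]
  ring

/-- the Lyapunov identity `AᵀP + PA = Q`; consequently, along any solution
of `ẋ = −A(t)x` with time-varying unit vectors `y_j(t)`, `𝓛(t) = x(t)ᵀPx(t)` satisfies
`d𝓛/dt = −x(t)ᵀQ(t)x(t)`.  Moreover `P` is positive definite whenever `k_d m > 1`. -/
theorem stmt19
    (m : ℕ) (hm : 1 ≤ m) (kp kd : ℝ) (hkp : 0 < kp) (hkd : 0 < kd)
    (y : Fin m → ℝ → (Fin 3 → ℝ)) (hy : ∀ j, ∀ t : ℝ, y j t ⬝ᵥ y j t = 1) :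
    -- the algebraic identity AᵀP + PA = Q, for every t
    (∀ t : ℝ,
      (AMat kp kd m (∑ j, proj (y j t)))ᵀ * PMat kp kd m +
        PMat kp kd m * AMat kp kd m (∑ j, proj (y j t)) =
      QMat kp kd m (∑ j, proj (y j t))) ∧
    -- the Lyapunov derivative along any solution of ẋ = −A(t)x
    (∀ x : ℝ → (Fin 3 ⊕ Fin 3 → ℝ),
      (∀ t : ℝ, HasDerivAt x (-(AMat kp kd m (∑ j, proj (y j t))).mulVec (x t)) t) →
      ∀ t : ℝ,
        HasDerivAt (fun s => x s ⬝ᵥ (PMat kp kd m).mulVec (x s))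
          (-(x t ⬝ᵥ (QMat kp kd m (∑ j, proj (y j t))).mulVec (x t))) t) ∧
    -- positive definiteness of P when k_d m > 1
    (kd * (m : ℝ) > 1 → (PMat kp kd m).PosDef) := by
  have hm' : (0:ℝ) < m := by exact_mod_cast hm
  have hd0 : kd * (m:ℝ) ≠ 0 := ne_of_gt (mul_pos hkd hm')
  have hS : ∀ t : ℝ, (∑ j, proj (y j t))ᵀ = ∑ j, proj (y j t) := by
    intro t
    rw [Matrix.transpose_sum]
    exact Finset.sum_congr rfl fun j _ => proj_symm _
  have hAPQ : ∀ t : ℝ,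
      (AMat kp kd m (∑ j, proj (y j t)))ᵀ * PMat kp kd m +
        PMat kp kd m * AMat kp kd m (∑ j, proj (y j t)) =
      QMat kp kd m (∑ j, proj (y j t)) :=
    fun t => lyap kp kd m _ (hS t) hd0
  refine ⟨hAPQ, ?_, ?_⟩
  · intro x hx t
    have h := quadDeriv (PMat kp kd m) x _ t (hx t)
    convert h using 1
    rw [← hAPQ t]
    simp only [Matrix.add_mulVec, dotProduct_add, Matrix.mulVec_neg, neg_dotProduct,
      dotProduct_neg, Matrix.mulVec_mulVec, dotMulVec, Matrix.transpose_transpose]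
    abel
  · intro hgt
    have hdpos : 0 < kd * (m:ℝ) := lt_trans one_pos hgt
    have hc0 : 0 < 1/(kd * (m:ℝ)) := by positivity
    have hc1 : 1/(kd * (m:ℝ)) < 1 := by
      rw [div_lt_one hdpos]; exact hgt
    rw [Matrix.posDef_iff_dotProduct_mulVec]
    constructor
    · have h1 : (PMat kp kd m)ᴴ = (PMat kp kd m)ᵀ := by
        ext i j; simp [Matrix.conjTranspose_apply, Matrix.transpose_apply]
      rw [Matrix.IsHermitian, h1, PMat, Matrix.transpose_smul, Matrix.fromBlocks_transpose]
      simp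
    · intro z hz
      have hstar : star z = z := by funext i; exact star_trivial _
      rw [hstar, quadForm]
      set u := z ∘ Sum.inl
      set v := z ∘ Sum.inr
      have hzz : 0 < u ⬝ᵥ u + v ⬝ᵥ v := by
        have hne : z ⬝ᵥ z ≠ 0 := fun h => hz (dotProduct_self_eq_zero.mp h)
        have hnn : 0 ≤ z ⬝ᵥ z := Finset.sum_nonneg fun i _ => mul_self_nonneg _
        have heq : z ⬝ᵥ z = u ⬝ᵥ u + v ⬝ᵥ v := by
          simp [dotProduct, Fintype.sum_sum_type, u, v]
        rw [← heq]
        exact lt_of_le_of_ne hnn (Ne.symm hne)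
      have hsq : 0 ≤ u ⬝ᵥ u + 2 * (u ⬝ᵥ v) + v ⬝ᵥ v := by
        have h0 : 0 ≤ (u + v) ⬝ᵥ (u + v) := Finset.sum_nonneg fun i _ => mul_self_nonneg _
        have : (u + v) ⬝ᵥ (u + v) = u ⬝ᵥ u + 2 * (u ⬝ᵥ v) + v ⬝ᵥ v := by
          simp [dotProduct_add, add_dotProduct, dotProduct_comm v u]; ring
        linarith [this ▸ h0]
      nlinarith [mul_nonneg hc0.le hsq]
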